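/- Let Γ be a simple graph of order n and let λ be the spectral radius of Γ (the largest eigenvalue of the adjacency matrix of Γ). Then every global strong defensive alliance S in Γ satisfies |S| ≥ ⌈n/(λ+1)⌉; in particular the global strong defensive alliance number satisfies γ_â(Γ) ≥ ⌈n/(λ+1)⌉. -/

import Mathlib

open Finset SimpleGraph

/-- `μ` is the second smallest (counted with multiplicity) value of the family `e`. -/
def IsSecondSmallest {ι : Type*} (e : ι → ℝ) (μ : ℝ) : Prop :=
  ∃ i₀ i₁ : ι, i₀ ≠ i₁ ∧ e i₀ ≤ μ ∧ e i₁ = μ ∧ ∀ j : ι, j ≠ i₀ → μ ≤ e j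

/-- `lam` is the largest value of the family `e`. -/
def IsLargest {ι : Type*} (e : ι → ℝ) (lam : ℝ) : Prop :=
  (∃ i : ι, e i = lam) ∧ ∀ i : ι, e i ≤ lam

open Matrix

lemma rayleigh {n : Type*} [Fintype n] [DecidableEq n] {A : Matrix n n ℝ}
    (hA : A.IsHermitian) {lam : ℝ} (hl : ∀ i, hA.eigenvalues i ≤ lam)
    (x : n → ℝ) : x ⬝ᵥ (A *ᵥ x) ≤ lam * (x ⬝ᵥ x) := by
  set U : Matrix n n ℝ := (hA.eigenvectorUnitary : Matrix n n ℝ) with hU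
  set y := (star U) *ᵥ x with hy
  have key : ∀ z : n → ℝ, x ⬝ᵥ (U *ᵥ z) = y ⬝ᵥ z := by
    intro z
    rw [dotProduct_mulVec, hy, star_eq_conjTranspose, ← mulVec_transpose]
    rfl
  have h1 : x ⬝ᵥ (A *ᵥ x) = ∑ i, hA.eigenvalues i * (y i)^2 := by
    conv_lhs => rw [hA.spectral_theorem]
    rw [Unitary.conjStarAlgAut_apply, ← hU, ← mulVec_mulVec, ← mulVec_mulVec, key, ← hy]
    simp only [dotProduct, mulVec_diagonal, Function.comp, RCLike.ofReal_real_eq_id, id]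
    exact Finset.sum_congr rfl fun i _ => by ring
  have h2 : x ⬝ᵥ x = y ⬝ᵥ y := by
    have : x ⬝ᵥ (U *ᵥ ((star U) *ᵥ x)) = y ⬝ᵥ y := key _
    rwa [mulVec_mulVec, hA.eigenvectorUnitary.2.2, one_mulVec] at this
  calc x ⬝ᵥ (A *ᵥ x) = ∑ i, hA.eigenvalues i * (y i)^2 := h1
    _ ≤ ∑ i, lam * (y i)^2 := Finset.sum_le_sum fun i _ =>
        mul_le_mul_of_nonneg_right (hl i) (sq_nonneg _)
    _ = lam * (x ⬝ᵥ x) := by rw [← Finset.mul_sum, h2]; simp [dotProduct, sq]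

theorem stmt_4 {V : Type*} [Fintype V] [DecidableEq V]
    (G : SimpleGraph V) [DecidableRel G.Adj]
    (n : ℕ) (hn : Fintype.card V = n)
    (lam : ℝ)
    (hlam : ∃ hA : (G.adjMatrix ℝ).IsHermitian, IsLargest hA.eigenvalues lam)
    (S : Finset V) (hS : S.Nonempty)
    (hdef : ∀ v ∈ S, (G.neighborFinset v \ S).card ≤ (G.neighborFinset v ∩ S).card)
    (hglob : ∀ v ∉ S, ∃ u ∈ S, G.Adj v u)
    :
    ⌈(n : ℝ) / (lam + 1)⌉ ≤ (S.card : ℤ) := by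
  obtain ⟨hA, hL⟩ := hlam
  obtain ⟨_, hle⟩ := hL
  obtain ⟨v0, hv0⟩ := hS
  -- lam ≥ 0
  have hlam0 : 0 ≤ lam := by
    have := rayleigh hA hle (Pi.single v0 1)
    simp [dotProduct, Matrix.mulVec, Pi.single_apply, Finset.sum_ite_eq,
      mul_ite, ite_mul] at this
    have h0 : (∑ i : V, if G.Adj i v0 then if i = v0 then (1:ℝ) else 0 else 0) = 0 := by
      apply Finset.sum_eq_zero
      intro i _
      split_ifs with h1 h2
      · exact absurd (h2 ▸ h1) (G.irrefl)
      · rfl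
      · rfl
    linarith
  set x : V → ℝ := fun v => if v ∈ S then 1 else 0 with hx
  have hxx : x ⬝ᵥ x = (S.card : ℝ) := by
    simp [dotProduct, hx, ite_mul, Finset.sum_ite_mem]
  have hAx : x ⬝ᵥ ((G.adjMatrix ℝ) *ᵥ x) = ∑ u ∈ S, ((G.neighborFinset u ∩ S).card : ℝ) := by
    simp only [dotProduct, Matrix.mulVec, hx, ite_mul, one_mul, zero_mul,
      Finset.sum_ite_mem, Finset.univ_inter]
    refine Finset.sum_congr rfl fun u hu => ?_
    simp only [dotProduct, mul_ite, mul_one, mul_zero, Finset.sum_ite_mem, Finset.univ_inter]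
    have heq : G.neighborFinset u ∩ S = S.filter (fun v => G.Adj u v) := by
      ext w; simp [and_comm]
    rw [heq]
    simp [SimpleGraph.adjMatrix_apply, Finset.sum_boole]
  have hdom : (Finset.univ \ S).card ≤ ∑ u ∈ S, (G.neighborFinset u \ S).card := by
    calc (Finset.univ \ S).card ≤ (S.biUnion (fun u => G.neighborFinset u \ S)).card := by
          apply Finset.card_le_card
          intro w hw
          simp only [Finset.mem_sdiff, Finset.mem_univ, true_and] at hw
          obtain ⟨u, hu, hadj⟩ := hglob w hw
          exact Finset.mem_biUnion.2 ⟨u, hu, by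
            simp [Finset.mem_sdiff, SimpleGraph.mem_neighborFinset, hadj.symm, hw]⟩
      _ ≤ _ := Finset.card_biUnion_le
  have hsum : ∑ u ∈ S, (G.neighborFinset u \ S).card ≤ ∑ u ∈ S, (G.neighborFinset u ∩ S).card :=
    Finset.sum_le_sum hdef
  have hray := rayleigh hA hle x
  rw [hAx, hxx] at hray
  have hcard : n = (Finset.univ \ S).card + S.card := by
    rw [← hn, ← Finset.card_univ, Finset.card_sdiff_add_card_eq_card (Finset.subset_univ S)]
  have hmain : (n : ℝ) ≤ (lam + 1) * S.card := by
    have h1 : ((Finset.univ \ S).card : ℝ) ≤ lam * S.card := by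
      calc ((Finset.univ \ S).card : ℝ)
          ≤ ∑ u ∈ S, ((G.neighborFinset u ∩ S).card : ℝ) := by
            exact_mod_cast Nat.cast_le.2 (le_trans hdom hsum)
        _ ≤ lam * S.card := hray
    have h2 : (n : ℝ) = ((Finset.univ \ S).card : ℝ) + S.card := by rw [hcard]; push_cast; ring
    linarith
  have hpos : (0:ℝ) < lam + 1 := by linarith
  rw [Int.ceil_le]
  push_cast
  rw [div_le_iff₀ hpos]
  linarith
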